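/- Let U ⊆ ℝ × ℝ be open and convex, and let Q, ν, u₁ : U → E be smooth with ‖u₁ k‖ = 1, ‖ν k‖ = 1 and ⟪ν k, Dᵢ Q k⟫ = 0 for all k ∈ U and i = 1, 2. Define u₂ k = u₁ k − 2 ⟪u₁ k, ν k⟫ • ν k. If the incident family (Q, u₁) is normal, then the reflected family (Q, u₂) is normal. (Malus' theorem for a single reflection on a smooth mirror.) -/

import Mathlib

open RealInnerProductSpace

noncomputable section

/-- The Euclidean affine space in which light propagates. -/
abbrev E : Type := EuclideanSpace ℝ (Fin 3)

/-- Partial derivative in the first coordinate direction of `ℝ × ℝ`. -/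
def D1 {F : Type*} [NormedAddCommGroup F] [NormedSpace ℝ F] (f : ℝ × ℝ → F) (k : ℝ × ℝ) : F :=
  fderiv ℝ f k (1, 0)

/-- Partial derivative in the second coordinate direction of `ℝ × ℝ`. -/
def D2 {F : Type*} [NormedAddCommGroup F] [NormedSpace ℝ F] (f : ℝ × ℝ → F) (k : ℝ × ℝ) : F :=
  fderiv ℝ f k (0, 1)

/-- A rank-2 family of oriented lines `(P, u)` is *normal* if there is a smooth
function `lam` such that the surface `k ↦ P k + lam k • u k` is orthogonal to all
the lines of the family. -/
def IsNormal (U : Set (ℝ × ℝ)) (P u : ℝ × ℝ → E) : Prop :=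
  ∃ lam : ℝ × ℝ → ℝ, ContDiffOn ℝ (⊤ : ℕ∞) lam U ∧
    ∀ k ∈ U, ⟪u k, D1 (fun k => P k + lam k • u k) k⟫ = 0 ∧
             ⟪u k, D2 (fun k => P k + lam k • u k) k⟫ = 0

/-- If `⟪f, f⟫` is constant near `k`, then `f k` is orthogonal to any directional
derivative of `f` at `k`. -/
lemma inner_fderiv_self_zero {f : ℝ × ℝ → E} {s : Set (ℝ × ℝ)} (hs : IsOpen s)
    {k : ℝ × ℝ} (hk : k ∈ s) (hf : DifferentiableAt ℝ f k)
    (hnorm : ∀ x ∈ s, ⟪f x, f x⟫ = 1) (v : ℝ × ℝ) :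
    ⟪f k, fderiv ℝ f k v⟫ = 0 := by
  have h0 : fderiv ℝ (fun x => ⟪f x, f x⟫) k = 0 := by
    have heq : (fun x => ⟪f x, f x⟫) =ᶠ[nhds k] (fun _ => (1 : ℝ)) := by
      filter_upwards [hs.mem_nhds hk] with x hx using hnorm x hx
    rw [heq.fderiv_eq]
    simp
  have h1 := (hf.hasFDerivAt.inner ℝ hf.hasFDerivAt).fderiv
  have h2 := congrFun (congrArg (fun L : (ℝ × ℝ) →L[ℝ] ℝ => (L : (ℝ × ℝ) → ℝ)) (h0 ▸ h1)) v
  simp only [ContinuousLinearMap.zero_apply, ContinuousLinearMap.comp_apply,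
    ContinuousLinearMap.prod_apply, fderivInnerCLM_apply] at h2
  have := h2.symm
  rw [real_inner_comm (fderiv ℝ f k v) (f k)] at this
  linarith

/-- Product-rule expansion of the derivative of the wavefront candidate surface. -/
lemma fderiv_surface {P u : ℝ × ℝ → E} {lam : ℝ × ℝ → ℝ} {k : ℝ × ℝ} (v : ℝ × ℝ)
    (hP : DifferentiableAt ℝ P k) (hu : DifferentiableAt ℝ u k)
    (hl : DifferentiableAt ℝ lam k) :
    fderiv ℝ (fun x => P x + lam x • u x) k v
      = fderiv ℝ P k v + (fderiv ℝ lam k v) • u k + lam k • fderiv ℝ u k v := by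
  have h := (hP.hasFDerivAt.add (hl.hasFDerivAt.smul hu.hasFDerivAt)).fderiv
  rw [show (fun x => P x + lam x • u x) = P + lam • u from rfl, h]
  simp only [ContinuousLinearMap.add_apply, ContinuousLinearMap.smul_apply,
    ContinuousLinearMap.smulRight_apply]
  module

/-- Key expansion: for a unit direction field, the orthogonality inner product splits. -/
lemma inner_surface_eq {s : Set (ℝ × ℝ)} (hs : IsOpen s) {P u : ℝ × ℝ → E}
    {lam : ℝ × ℝ → ℝ} {k : ℝ × ℝ} (hk : k ∈ s) (v : ℝ × ℝ)
    (hP : DifferentiableAt ℝ P k) (hu : DifferentiableAt ℝ u k)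
    (hl : DifferentiableAt ℝ lam k) (hunit : ∀ x ∈ s, ⟪u x, u x⟫ = 1) :
    ⟪u k, fderiv ℝ (fun x => P x + lam x • u x) k v⟫
      = ⟪u k, fderiv ℝ P k v⟫ + fderiv ℝ lam k v := by
  rw [fderiv_surface v hP hu hl]
  rw [inner_add_right, inner_add_right, real_inner_smul_right, real_inner_smul_right,
    hunit k hk, inner_fderiv_self_zero hs hk hu hunit v]
  ring

theorem malus_single_reflection
    (U : Set (ℝ × ℝ)) (hU : IsOpen U) (hconv : Convex ℝ U)
    (Q nu u₁ : ℝ × ℝ → E)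
    (hQ : ContDiffOn ℝ (⊤ : ℕ∞) Q U) (hnu : ContDiffOn ℝ (⊤ : ℕ∞) nu U)
    (hu₁ : ContDiffOn ℝ (⊤ : ℕ∞) u₁ U)
    (hu₁unit : ∀ k ∈ U, ‖u₁ k‖ = 1) (hnunit : ∀ k ∈ U, ‖nu k‖ = 1)
    (horth : ∀ k ∈ U, ⟪nu k, D1 Q k⟫ = 0 ∧ ⟪nu k, D2 Q k⟫ = 0)
    (u₂ : ℝ × ℝ → E)
    (hu₂ : ∀ k, u₂ k = u₁ k - (2 * ⟪u₁ k, nu k⟫) • nu k)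
    (hnormal : IsNormal U Q u₁) :
    IsNormal U Q u₂ := by
  obtain ⟨lam, hlam, hcond⟩ := hnormal
  refine ⟨lam, hlam, ?_⟩
  intro k hk
  -- differentiability at k
  have hQd : DifferentiableAt ℝ Q k :=
    (hQ.contDiffAt (hU.mem_nhds hk)).differentiableAt (by simp)
  have hnud : DifferentiableAt ℝ nu k :=
    (hnu.contDiffAt (hU.mem_nhds hk)).differentiableAt (by simp)
  have hu₁d : DifferentiableAt ℝ u₁ k :=
    (hu₁.contDiffAt (hU.mem_nhds hk)).differentiableAt (by simp)
  have hld : DifferentiableAt ℝ lam k :=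
    (hlam.contDiffAt (hU.mem_nhds hk)).differentiableAt (by simp)
  have hu₂eq : u₂ = fun x => u₁ x - (2 * ⟪u₁ x, nu x⟫) • nu x := funext hu₂
  have hu₂d : DifferentiableAt ℝ u₂ k := by
    rw [hu₂eq]
    exact hu₁d.sub (((differentiableAt_const (2:ℝ)).mul (hu₁d.inner ℝ hnud)).smul hnud)
  -- unit norms as inner products
  have hu₁i : ∀ x ∈ U, ⟪u₁ x, u₁ x⟫ = 1 := fun x hx => by
    rw [real_inner_self_eq_norm_sq, hu₁unit x hx]; norm_num
  have hnui : ∀ x ∈ U, ⟪nu x, nu x⟫ = 1 := fun x hx => by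
    rw [real_inner_self_eq_norm_sq, hnunit x hx]; norm_num
  have hu₂i : ∀ x ∈ U, ⟪u₂ x, u₂ x⟫ = 1 := by
    intro x hx
    rw [hu₂ x]
    simp only [inner_sub_left, inner_sub_right, real_inner_smul_left, real_inner_smul_right,
      hu₁i x hx, hnui x hx, real_inner_comm (nu x) (u₁ x)]
    ring
  -- the reflected ray has the same inner product with the tangent vectors of Q
  have hQinner : ∀ v : ℝ × ℝ, ⟪nu k, fderiv ℝ Q k v⟫ = 0 →
      ⟪u₂ k, fderiv ℝ Q k v⟫ = ⟪u₁ k, fderiv ℝ Q k v⟫ := by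
    intro v hv
    rw [hu₂ k, inner_sub_left, real_inner_smul_left, hv]
    ring
  have key : ∀ v : ℝ × ℝ, ⟪nu k, fderiv ℝ Q k v⟫ = 0 →
      ⟪u₁ k, fderiv ℝ (fun x => Q x + lam x • u₁ x) k v⟫ = 0 →
      ⟪u₂ k, fderiv ℝ (fun x => Q x + lam x • u₂ x) k v⟫ = 0 := by
    intro v hv h1
    rw [inner_surface_eq hU hk v hQd hu₁d hld hu₁i] at h1
    rw [inner_surface_eq hU hk v hQd hu₂d hld hu₂i, hQinner v hv]
    exact h1
  obtain ⟨h1, h2⟩ := hcond k hk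
  obtain ⟨hn1, hn2⟩ := horth k hk
  exact ⟨key (1, 0) hn1 h1, key (0, 1) hn2 h2⟩

end
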